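/- Let G be a graph with n+1 vertices and 1 + C(n,2) edges, equipped with a cute n-edge-colouring (i.e., the n colour classes have sizes 1, 1, 2, 3, ..., n-1). Then G has a heterochromatic spanning tree. -/

import Mathlib

open SimpleGraph Set

set_option linter.unusedSectionVars false
set_option linter.unusedVariables false
set_option maxHeartbeats 1000000

namespace CuteProof

variable {V : Type*} [Fintype V] [DecidableEq V]

/-- Number of connected components of the graph spanned by an edge finset. -/
noncomputable def cnum (X : Finset (Sym2 V)) : ℕ :=
  Nat.card (SimpleGraph.fromEdgeSet (↑X : Set (Sym2 V))).ConnectedComponent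

lemma cc_finite (H : SimpleGraph V) : Finite H.ConnectedComponent := by
  unfold SimpleGraph.ConnectedComponent
  infer_instance

lemma cnum_mono {X Y : Finset (Sym2 V)} (h : X ⊆ Y) : cnum Y ≤ cnum X := by
  have hle : fromEdgeSet (↑X : Set (Sym2 V)) ≤ fromEdgeSet (↑Y) :=
    fromEdgeSet_mono (by exact_mod_cast h)
  have := cc_finite (fromEdgeSet (↑X : Set (Sym2 V)))
  apply Nat.card_le_card_of_surjective
    (SimpleGraph.ConnectedComponent.map (SimpleGraph.Hom.ofLE hle))
  intro K
  induction K using SimpleGraph.ConnectedComponent.ind with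
  | _ v => exact ⟨(fromEdgeSet (↑X : Set (Sym2 V))).connectedComponentMk v, rfl⟩

lemma cnum_empty : cnum (∅ : Finset (Sym2 V)) = Fintype.card V := by
  unfold cnum
  rw [Finset.coe_empty, fromEdgeSet_empty]
  rw [← Nat.card_eq_fintype_card]
  symm
  apply Nat.card_eq_of_bijective (⊥ : SimpleGraph V).connectedComponentMk
  constructor
  · intro a b hab
    exact reachable_bot.mp (SimpleGraph.ConnectedComponent.eq.mp hab)
  · intro K
    induction K using SimpleGraph.ConnectedComponent.ind with
    | _ v => exact ⟨v, rfl⟩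

lemma reachable_insert_iff {u v a b : V} (huv : u ≠ v) (S : Set (Sym2 V)) :
    (fromEdgeSet (insert s(u,v) S)).Reachable a b ↔
      ((fromEdgeSet S).Reachable a b ∨
      ((fromEdgeSet S).Reachable a u ∧ (fromEdgeSet S).Reachable v b) ∨
      ((fromEdgeSet S).Reachable a v ∧ (fromEdgeSet S).Reachable u b)) := by
  constructor
  · intro h
    rw [reachable_iff_reflTransGen] at h
    induction h with
    | refl => exact Or.inl (Reachable.refl _)
    | @tail x c hxy hadj ih =>
      rw [fromEdgeSet_adj] at hadj
      obtain ⟨hmem, hne⟩ := hadj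
      have hstep : (fromEdgeSet S).Reachable x c ∨
          ((fromEdgeSet S).Reachable x u ∧ (fromEdgeSet S).Reachable v c) ∨
          ((fromEdgeSet S).Reachable x v ∧ (fromEdgeSet S).Reachable u c) := by
        rcases Set.mem_insert_iff.mp hmem with heq | hS
        · rw [Sym2.eq_iff] at heq
          rcases heq with ⟨h1, h2⟩ | ⟨h1, h2⟩
          · exact Or.inr (Or.inl ⟨by rw [h1], by rw [h2]⟩)
          · exact Or.inr (Or.inr ⟨by rw [h1], by rw [h2]⟩)
        · exact Or.inl ((fromEdgeSet_adj _).mpr ⟨hS, hne⟩).reachable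
      rcases ih with hab | ⟨hau, hvx⟩ | ⟨hav, hux⟩ <;>
        rcases hstep with hxc | ⟨hxu, hvc⟩ | ⟨hxv, huc⟩
      · exact Or.inl (hab.trans hxc)
      · exact Or.inr (Or.inl ⟨hab.trans hxu, hvc⟩)
      · exact Or.inr (Or.inr ⟨hab.trans hxv, huc⟩)
      · exact Or.inr (Or.inl ⟨hau, hvx.trans hxc⟩)
      · exact Or.inl (((hau.trans (hvx.trans hxu).symm)).trans hvc)
      · exact Or.inl (hau.trans huc)
      · exact Or.inr (Or.inr ⟨hav, hux.trans hxc⟩)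
      · exact Or.inl (hav.trans hvc)
      · exact Or.inl ((hav.trans (hux.trans hxv).symm).trans huc)
  · have hmono : fromEdgeSet S ≤ fromEdgeSet (insert s(u,v) S) :=
      fromEdgeSet_mono (Set.subset_insert _ _)
    have hadj : (fromEdgeSet (insert s(u,v) S)).Adj u v :=
      (fromEdgeSet_adj _).mpr ⟨Set.mem_insert _ _, huv⟩
    rintro (hab | ⟨hau, hvb⟩ | ⟨hav, hub⟩)
    · exact hab.mono hmono
    · exact ((hau.mono hmono).trans hadj.reachable).trans (hvb.mono hmono)
    · exact ((hav.mono hmono).trans hadj.symm.reachable).trans (hub.mono hmono)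

lemma cnum_insert_reach {u v : V} {X : Finset (Sym2 V)} (huv : u ≠ v)
    (h : (fromEdgeSet (↑X : Set (Sym2 V))).Reachable u v) :
    cnum (insert s(u,v) X) = cnum X := by
  classical
  unfold cnum
  rw [Finset.coe_insert]
  symm
  have := cc_finite (fromEdgeSet (↑X : Set (Sym2 V)))
  have hle : fromEdgeSet (↑X : Set (Sym2 V)) ≤ fromEdgeSet (insert s(u,v) ↑X) :=
    fromEdgeSet_mono (Set.subset_insert _ _)
  apply Nat.card_eq_of_bijective
    (SimpleGraph.ConnectedComponent.map (SimpleGraph.Hom.ofLE hle))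
  constructor
  · intro K L hKL
    induction K using SimpleGraph.ConnectedComponent.ind with | _ a =>
    induction L using SimpleGraph.ConnectedComponent.ind with | _ b =>
    simp only [SimpleGraph.ConnectedComponent.map_mk,
      SimpleGraph.Hom.ofLE_apply] at hKL
    have hr := (reachable_insert_iff huv (↑X : Set (Sym2 V))).mp
      (SimpleGraph.ConnectedComponent.eq.mp hKL)
    apply SimpleGraph.ConnectedComponent.eq.mpr
    rcases hr with hab | ⟨hau, hvb⟩ | ⟨hav, hub⟩
    · exact hab
    · exact (hau.trans h).trans hvb
    · exact (hav.trans h.symm).trans hub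
  · intro K
    induction K using SimpleGraph.ConnectedComponent.ind with | _ a =>
    exact ⟨(fromEdgeSet (↑X : Set (Sym2 V))).connectedComponentMk a, rfl⟩

lemma cnum_insert_not_reach {u v : V} {X : Finset (Sym2 V)} (huv : u ≠ v)
    (h : ¬ (fromEdgeSet (↑X : Set (Sym2 V))).Reachable u v) :
    cnum X = cnum (insert s(u,v) X) + 1 := by
  classical
  unfold cnum
  rw [Finset.coe_insert]
  set H0 := fromEdgeSet (↑X : Set (Sym2 V)) with hH0
  set H := fromEdgeSet (insert s(u,v) (↑X : Set (Sym2 V))) with hH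
  have : Finite H0.ConnectedComponent := cc_finite _
  have : Finite H.ConnectedComponent := cc_finite _
  have hle : H0 ≤ H := fromEdgeSet_mono (Set.subset_insert _ _)
  -- split off the component of v
  have hsplit : Nat.card H0.ConnectedComponent
      = Nat.card {K : H0.ConnectedComponent // K ≠ H0.connectedComponentMk v} + 1 := by
    rw [← Nat.card_congr (Equiv.optionSubtypeNe (H0.connectedComponentMk v)),
      Finite.card_option]
  rw [hsplit]
  congr 1
  apply Nat.card_eq_of_bijective
    (fun K => SimpleGraph.ConnectedComponent.map
      (SimpleGraph.Hom.ofLE hle) K.1)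
  constructor
  · rintro ⟨K, hK⟩ ⟨L, hL⟩ hKL
    induction K using SimpleGraph.ConnectedComponent.ind with | _ a =>
    induction L using SimpleGraph.ConnectedComponent.ind with | _ b =>
    simp only [SimpleGraph.ConnectedComponent.map_mk,
      SimpleGraph.Hom.ofLE_apply] at hKL
    have hr := (reachable_insert_iff huv (↑X : Set (Sym2 V))).mp
      (SimpleGraph.ConnectedComponent.eq.mp hKL)
    have : H0.connectedComponentMk a = H0.connectedComponentMk b := by
      rcases hr with hab | ⟨hau, hvb⟩ | ⟨hav, hub⟩
      · exact SimpleGraph.ConnectedComponent.eq.mpr hab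
      · exact absurd (SimpleGraph.ConnectedComponent.eq.mpr hvb.symm) hL
      · exact absurd (SimpleGraph.ConnectedComponent.eq.mpr hav) hK
    exact Subtype.ext this
  · intro K
    induction K using SimpleGraph.ConnectedComponent.ind with | _ a =>
    by_cases hav : H0.Reachable a v
    · refine ⟨⟨H0.connectedComponentMk u, ?_⟩, ?_⟩
      · intro hc
        exact h (SimpleGraph.ConnectedComponent.eq.mp hc)
      · simp only [SimpleGraph.ConnectedComponent.map_mk,
          SimpleGraph.Hom.ofLE_apply]
        apply SimpleGraph.ConnectedComponent.eq.mpr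
        have hadj : H.Adj u v := (fromEdgeSet_adj _).mpr ⟨Set.mem_insert _ _, huv⟩
        exact hadj.reachable.trans (hav.mono hle).symm
    · refine ⟨⟨H0.connectedComponentMk a, ?_⟩, rfl⟩
      intro hc
      exact hav (SimpleGraph.ConnectedComponent.eq.mp hc)

lemma fromEdgeSet_insert_diag (u : V) (S : Set (Sym2 V)) :
    fromEdgeSet (insert s(u,u) S) = fromEdgeSet S := by
  ext a b
  simp only [fromEdgeSet_adj, Set.mem_insert_iff, Sym2.eq_iff]
  constructor
  · rintro ⟨h | h, hne⟩
    · rcases h with ⟨rfl, rfl⟩ | ⟨rfl, rfl⟩ <;> exact absurd rfl hne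
    · exact ⟨h, hne⟩
  · rintro ⟨h, hne⟩
    exact ⟨Or.inr h, hne⟩

lemma cnum_insert_diag (u : V) (X : Finset (Sym2 V)) :
    cnum (insert s(u,u) X) = cnum X := by
  unfold cnum
  rw [Finset.coe_insert, fromEdgeSet_insert_diag]

lemma cnum_le_insert (e : Sym2 V) (X : Finset (Sym2 V)) :
    cnum (insert e X) ≤ cnum X := cnum_mono (Finset.subset_insert _ _)

lemma cnum_insert_ge (e : Sym2 V) (X : Finset (Sym2 V)) :
    cnum X ≤ cnum (insert e X) + 1 := by
  induction e using Sym2.ind with | _ u v =>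
  by_cases huv : u = v
  · subst huv; rw [cnum_insert_diag]; omega
  · by_cases h : (fromEdgeSet (↑X : Set (Sym2 V))).Reachable u v
    · rw [cnum_insert_reach huv h]; omega
    · rw [cnum_insert_not_reach huv h]

lemma cnum_diminish {Y X : Finset (Sym2 V)} (hYX : Y ⊆ X) (e : Sym2 V) :
    cnum X + cnum (insert e Y) ≤ cnum (insert e X) + cnum Y := by
  induction e using Sym2.ind with | _ u v =>
  by_cases huv : u = v
  · subst huv; rw [cnum_insert_diag, cnum_insert_diag]
  · by_cases hY : (fromEdgeSet (↑Y : Set (Sym2 V))).Reachable u v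
    · have hX : (fromEdgeSet (↑X : Set (Sym2 V))).Reachable u v :=
        hY.mono (fromEdgeSet_mono (by exact_mod_cast hYX))
      rw [cnum_insert_reach huv hY, cnum_insert_reach huv hX]
    · by_cases hX : (fromEdgeSet (↑X : Set (Sym2 V))).Reachable u v
      · rw [cnum_insert_reach huv hX]
        have := cnum_insert_not_reach huv hY
        omega
      · have h1 := cnum_insert_not_reach huv hY
        have h2 := cnum_insert_not_reach huv hX
        omega

lemma cnum_submod (A B : Finset (Sym2 V)) :
    cnum A + cnum B ≤ cnum (A ∪ B) + cnum (A ∩ B) := by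
  classical
  suffices H : ∀ (k : ℕ) (A B : Finset (Sym2 V)), (B \ A).card ≤ k →
      cnum A + cnum B ≤ cnum (A ∪ B) + cnum (A ∩ B) from H _ A B le_rfl
  intro k
  induction k with
  | zero =>
    intro A B hcard
    have hBA : B ⊆ A := by
      intro e he
      by_contra hne
      have : e ∈ B \ A := Finset.mem_sdiff.mpr ⟨he, hne⟩
      have := Finset.card_pos.mpr ⟨e, this⟩
      omega
    rw [Finset.union_eq_left.mpr hBA, Finset.inter_eq_right.mpr hBA]
  | succ k ih =>
    intro A B hcard
    by_cases hBA : B ⊆ A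
    · rw [Finset.union_eq_left.mpr hBA, Finset.inter_eq_right.mpr hBA]
    · obtain ⟨e, he⟩ : (B \ A).Nonempty := by
        rw [Finset.sdiff_nonempty]; exact hBA
      obtain ⟨heB, heA⟩ := Finset.mem_sdiff.mp he
      have hstep : (B \ insert e A).card ≤ k := by
        rw [Finset.sdiff_insert]
        have := Finset.card_erase_of_mem he
        omega
      have h1 := ih (insert e A) B hstep
      have hu : insert e A ∪ B = A ∪ B := by
        rw [Finset.insert_union, Finset.insert_eq_self.mpr (Finset.mem_union_right _ heB)]
      have hi : insert e A ∩ B = insert e (A ∩ B) := Finset.insert_inter_of_mem heB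
      rw [hu, hi] at h1
      have h2 := cnum_diminish (Finset.inter_subset_left (s₁ := A) (s₂ := B)) e
      omega

lemma card_add_cnum (X : Finset (Sym2 V)) : Fintype.card V ≤ cnum X + X.card := by
  classical
  induction X using Finset.induction_on with
  | empty =>
    have : cnum (∅ : Finset (Sym2 V)) = Fintype.card V := cnum_empty
    omega
  | @insert a X ha ih =>
    have h1 := cnum_insert_ge a X
    have h2 := Finset.card_insert_of_notMem ha
    omega

lemma two_mul_choose_two (k : ℕ) : 2 * k.choose 2 = k * (k - 1) := by
  induction k with
  | zero => rfl
  | succ k ih =>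
    rw [Nat.choose_succ_succ, Nat.choose_one_right, Nat.mul_add, ih]
    cases k with
    | zero => rfl
    | succ m =>
      simp only [Nat.add_sub_cancel]
      ring

lemma choose2_add {x a : ℕ} (hx : 1 ≤ x) (ha : 1 ≤ a) :
    x.choose 2 + a.choose 2 ≤ (x + a - 1).choose 2 := by
  obtain ⟨p, rfl⟩ := Nat.exists_eq_add_of_le hx
  obtain ⟨q, rfl⟩ := Nat.exists_eq_add_of_le ha
  have h1 := two_mul_choose_two (1 + p)
  have h2 := two_mul_choose_two (1 + q)
  have h3 := two_mul_choose_two (1 + p + (1 + q) - 1)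
  have harg : 1 + p + (1 + q) - 1 = p + q + 1 := by omega
  rw [harg]
  rw [show 1 + p - 1 = p from by omega] at h1
  rw [show 1 + q - 1 = q from by omega] at h2
  rw [harg, show p + q + 1 - 1 = p + q from by omega] at h3
  nlinarith [h1, h2, h3]

lemma sum_choose_le {ι : Type*} (t : Finset ι) (f : ι → ℕ) (hf : ∀ i ∈ t, 1 ≤ f i) :
    (∑ i ∈ t, (f i).choose 2) ≤ ((∑ i ∈ t, f i) + 1 - t.card).choose 2 := by
  classical
  induction t using Finset.induction_on with
  | empty => simp
  | @insert a t ha ih =>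
    have hf' : ∀ i ∈ t, 1 ≤ f i := fun i hi => hf i (Finset.mem_insert_of_mem hi)
    have hSc : t.card ≤ ∑ i ∈ t, f i := by
      calc t.card = ∑ _i ∈ t, 1 := by rw [Finset.card_eq_sum_ones]
      _ ≤ ∑ i ∈ t, f i := Finset.sum_le_sum hf'
    have hfa : 1 ≤ f a := hf a (Finset.mem_insert_self _ _)
    rw [Finset.sum_insert ha, Finset.sum_insert ha, Finset.card_insert_of_notMem ha]
    calc (f a).choose 2 + ∑ i ∈ t, (f i).choose 2
        ≤ (f a).choose 2 + ((∑ i ∈ t, f i) + 1 - t.card).choose 2 := by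
          exact Nat.add_le_add_left (ih hf') _
      _ = ((∑ i ∈ t, f i) + 1 - t.card).choose 2 + (f a).choose 2 := by
          rw [Nat.add_comm]
      _ ≤ (((∑ i ∈ t, f i) + 1 - t.card) + f a - 1).choose 2 :=
          choose2_add (by omega) hfa
      _ = ((f a + ∑ i ∈ t, f i) + 1 - (t.card + 1)).choose 2 := by
          congr 1; omega

lemma filter_diag_sym2_card (s : Finset V) :
    (s.sym2.filter (fun e => e.IsDiag)).card = s.card := by
  classical
  have : s.sym2.filter (fun e => e.IsDiag) = s.image Sym2.diag := by
    ext e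
    induction e using Sym2.ind with | _ x y =>
    simp only [Finset.mem_filter, Finset.mk_mem_sym2_iff, Sym2.mk_isDiag_iff,
      Finset.mem_image]
    constructor
    · rintro ⟨⟨hx, hy⟩, rfl⟩
      exact ⟨x, hx, rfl⟩
    · rintro ⟨a, haa, hae⟩
      have : a = x ∧ a = y := by
        rw [Sym2.diag, Sym2.eq_iff] at hae
        tauto
      obtain ⟨rfl, h2⟩ := this
      exact ⟨⟨haa, h2 ▸ haa⟩, h2⟩
  rw [this, Finset.card_image_of_injective _ Sym2.diag_injective]

lemma nondiag_sym2_card (s : Finset V) :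
    (s.sym2.filter (fun e => ¬ e.IsDiag)).card = s.card.choose 2 := by
  classical
  have h := Finset.card_filter_add_card_filter_not
    (s := s.sym2) (p := fun e => Sym2.IsDiag e)
  rw [filter_diag_sym2_card, Finset.card_sym2] at h
  have h2 : (s.card + 1).choose 2 = s.card + s.card.choose 2 := by
    rw [Nat.choose_succ_succ, Nat.choose_one_right]
  omega

lemma cnum_card_bound (X : Finset (Sym2 V)) (hnd : ∀ e ∈ X, ¬ e.IsDiag) :
    X.card ≤ (Fintype.card V + 1 - cnum X).choose 2 := by
  classical
  set H := fromEdgeSet (↑X : Set (Sym2 V)) with hH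
  have hfin : Finite H.ConnectedComponent := by
    unfold SimpleGraph.ConnectedComponent; infer_instance
  letI : Fintype H.ConnectedComponent := Fintype.ofFinite _
  set fib : H.ConnectedComponent → Finset V :=
    fun K => Finset.univ.filter (fun v => H.connectedComponentMk v = K) with hfib
  have hsub : X ⊆ (Finset.univ : Finset H.ConnectedComponent).biUnion
      (fun K => (fib K).sym2.filter (fun e => ¬ e.IsDiag)) := by
    intro e he
    induction e using Sym2.ind with | _ x y =>
    have hxy : x ≠ y := by
      intro hc; exact hnd _ he (by rw [Sym2.mk_isDiag_iff]; exact hc)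
    have hadj : H.Adj x y := by
      rw [hH, fromEdgeSet_adj]; exact ⟨he, hxy⟩
    refine Finset.mem_biUnion.mpr ⟨H.connectedComponentMk x, Finset.mem_univ _, ?_⟩
    refine Finset.mem_filter.mpr ⟨?_, by rw [Sym2.mk_isDiag_iff]; exact hxy⟩
    refine Finset.mk_mem_sym2_iff.mpr ⟨?_, ?_⟩
    · simp only [hfib, Finset.mem_filter, Finset.mem_univ, true_and]
    · simp only [hfib, Finset.mem_filter, Finset.mem_univ, true_and]
      exact (SimpleGraph.ConnectedComponent.eq.mpr hadj.reachable).symm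
  have hfibsum : ∑ K : H.ConnectedComponent, (fib K).card = Fintype.card V := by
    rw [← Finset.card_univ (α := V)]
    exact (Finset.card_eq_sum_card_fiberwise (fun v _ => Finset.mem_univ _)).symm
  have hfibpos : ∀ K ∈ (Finset.univ : Finset H.ConnectedComponent), 1 ≤ (fib K).card := by
    intro K _
    induction K using SimpleGraph.ConnectedComponent.ind with | _ v =>
    refine Finset.card_pos.mpr ⟨v, ?_⟩
    simp only [hfib, Finset.mem_filter, Finset.mem_univ, true_and]
  have hcnum : cnum X = Fintype.card H.ConnectedComponent := by
    unfold cnum; rw [← hH, Nat.card_eq_fintype_card]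
  calc X.card ≤ ((Finset.univ : Finset H.ConnectedComponent).biUnion
      (fun K => (fib K).sym2.filter (fun e => ¬ e.IsDiag))).card :=
        Finset.card_le_card hsub
    _ ≤ ∑ K : H.ConnectedComponent, ((fib K).sym2.filter (fun e => ¬ e.IsDiag)).card :=
        Finset.card_biUnion_le
    _ = ∑ K : H.ConnectedComponent, (fib K).card.choose 2 := by
        exact Finset.sum_congr rfl (fun K _ => nondiag_sym2_card _)
    _ ≤ ((∑ K : H.ConnectedComponent, (fib K).card) + 1
          - (Finset.univ : Finset H.ConnectedComponent).card).choose 2 :=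
        sum_choose_le _ _ hfibpos
    _ = (Fintype.card V + 1 - cnum X).choose 2 := by
        rw [hfibsum, Finset.card_univ, hcnum]

lemma rado_aux [Nonempty V] (s : Finset ℕ) (A : ℕ → Finset (Sym2 V))
    (hall : ∀ i ∈ s, (A i).card ≤ 1)
    (hcond : ∀ I ⊆ s, cnum (I.biUnion A) + I.card ≤ Fintype.card V) :
    ∃ t : ℕ → Sym2 V, (∀ i ∈ s, t i ∈ A i) ∧ Set.InjOn t ↑s ∧
      cnum (s.image t) + s.card ≤ Fintype.card V := by
  classical
  have hne : ∀ i ∈ s, (A i).Nonempty := by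
    intro i hi
    by_contra hemp
    rw [Finset.not_nonempty_iff_eq_empty] at hemp
    have h1 := hcond {i} (by simpa using hi)
    rw [Finset.singleton_biUnion, hemp, Finset.card_singleton, cnum_empty] at h1
    omega
  set t : ℕ → Sym2 V := fun i =>
    if h : (A i).Nonempty then h.choose
    else s(Classical.arbitrary V, Classical.arbitrary V) with ht
  have hmem : ∀ i ∈ s, t i ∈ A i := by
    intro i hi
    simp only [ht, dif_pos (hne i hi)]
    exact (hne i hi).choose_spec
  have hsingle : ∀ i ∈ s, A i = {t i} := by
    intro i hi
    obtain ⟨a, ha⟩ := Finset.card_eq_one.mp (le_antisymm (hall i hi)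
      (Finset.card_pos.mpr (hne i hi)))
    have := hmem i hi
    rw [ha] at this ⊢
    rw [Finset.mem_singleton] at this
    rw [this]
  have himg : s.biUnion A = s.image t := by
    rw [Finset.biUnion_congr rfl hsingle]
    exact Finset.biUnion_singleton
  have hkey := hcond s (subset_refl s)
  rw [himg] at hkey
  have h4 := card_add_cnum (s.image t)
  have h5 := Finset.card_image_le (s := s) (f := t)
  exact ⟨t, hmem, Finset.injOn_of_card_image_eq (by omega), hkey⟩

lemma rado [Nonempty V] (N : ℕ) (A : ℕ → Finset (Sym2 V)) (s : Finset ℕ)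
    (hN : ∑ i ∈ s, (A i).card ≤ N)
    (hcond : ∀ I ⊆ s, cnum (I.biUnion A) + I.card ≤ Fintype.card V) :
    ∃ t : ℕ → Sym2 V, (∀ i ∈ s, t i ∈ A i) ∧ Set.InjOn t ↑s ∧
      cnum (s.image t) + s.card ≤ Fintype.card V := by
  classical
  induction N generalizing A with
  | zero =>
    refine rado_aux s A (fun i hi => ?_) hcond
    have := Finset.sum_eq_zero_iff.mp (Nat.le_zero.mp hN) i hi
    omega
  | succ N ih =>
    by_cases hall : ∀ i ∈ s, (A i).card ≤ 1
    · exact rado_aux s A hall hcond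
    · push_neg at hall
      obtain ⟨i0, hi0s, hcard2⟩ := hall
      obtain ⟨x, hx, y, hy, hxy⟩ := Finset.one_lt_card.mp hcard2
      -- if removing z from A i0 keeps the condition, we can recurse
      have recurse : ∀ z ∈ A i0,
          (∀ I ⊆ s, cnum (I.biUnion (Function.update A i0 ((A i0).erase z)))
            + I.card ≤ Fintype.card V) →
          ∃ t : ℕ → Sym2 V, (∀ i ∈ s, t i ∈ A i) ∧ Set.InjOn t ↑s ∧
            cnum (s.image t) + s.card ≤ Fintype.card V := by
        intro z hz hcz
        set A' := Function.update A i0 ((A i0).erase z) with hA'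
        have hsum' : ∑ i ∈ s, (A' i).card ≤ N := by
          have e1 : ∑ i ∈ s, (A' i).card
              = ∑ i ∈ s \ {i0}, (A' i).card + (A' i0).card :=
            Finset.sum_eq_sum_sdiff_singleton_add hi0s _
          have e2 : ∑ i ∈ s, (A i).card
              = ∑ i ∈ s \ {i0}, (A i).card + (A i0).card :=
            Finset.sum_eq_sum_sdiff_singleton_add hi0s _
          have e3 : ∑ i ∈ s \ {i0}, (A' i).card = ∑ i ∈ s \ {i0}, (A i).card := by
            refine Finset.sum_congr rfl (fun i hi => ?_)
            have : i ≠ i0 := by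
              have := Finset.mem_sdiff.mp hi
              simpa using this.2
            rw [hA', Function.update_of_ne this]
          have e4 : (A' i0).card = (A i0).card - 1 := by
            rw [hA', Function.update_self]
            exact Finset.card_erase_of_mem hz
          omega
        obtain ⟨t, h1, h2, h3⟩ := ih A' hsum' hcz
        refine ⟨t, fun i hi => ?_, h2, h3⟩
        have hti := h1 i hi
        by_cases hii : i = i0
        · subst hii
          rw [hA', Function.update_self] at hti
          exact Finset.erase_subset _ _ hti
        · rwa [hA', Function.update_of_ne hii] at hti
      by_cases hcx : ∀ I ⊆ s, cnum (I.biUnion (Function.update A i0 ((A i0).erase x)))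
          + I.card ≤ Fintype.card V
      · exact recurse x hx hcx
      by_cases hcy : ∀ I ⊆ s, cnum (I.biUnion (Function.update A i0 ((A i0).erase y)))
          + I.card ≤ Fintype.card V
      · exact recurse y hy hcy
      exfalso
      push_neg at hcx hcy
      obtain ⟨I, hIs, hI⟩ := hcx
      obtain ⟨J, hJs, hJ⟩ := hcy
      set Ax := Function.update A i0 ((A i0).erase x) with hAx
      set Ay := Function.update A i0 ((A i0).erase y) with hAy
      have hmemI : i0 ∈ I := by
        by_contra hni
        have : I.biUnion Ax = I.biUnion A := by
          refine Finset.biUnion_congr rfl (fun i hi => ?_)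
          rw [hAx, Function.update_of_ne (fun hc => hni (by rw [← hc]; exact hi))]
        rw [this] at hI
        have := hcond I hIs
        omega
      have hmemJ : i0 ∈ J := by
        by_contra hni
        have : J.biUnion Ay = J.biUnion A := by
          refine Finset.biUnion_congr rfl (fun i hi => ?_)
          rw [hAy, Function.update_of_ne (fun hc => hni (by rw [← hc]; exact hi))]
        rw [this] at hJ
        have := hcond J hJs
        omega
      set P := I.biUnion Ax with hP
      set Q := J.biUnion Ay with hQ
      have hsubA : ∀ i, Ax i ⊆ A i ∧ Ay i ⊆ A i := by
        intro i
        constructor <;> by_cases hii : i = i0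
        · subst hii; rw [hAx, Function.update_self]; exact Finset.erase_subset _ _
        · rw [hAx, Function.update_of_ne hii]
        · subst hii; rw [hAy, Function.update_self]; exact Finset.erase_subset _ _
        · rw [hAy, Function.update_of_ne hii]
      have hunion : P ∪ Q = (I ∪ J).biUnion A := by
        apply subset_antisymm
        · intro e he
          rcases Finset.mem_union.mp he with h | h
          · obtain ⟨i, hi, hei⟩ := Finset.mem_biUnion.mp h
            exact Finset.mem_biUnion.mpr ⟨i, Finset.mem_union_left _ hi, (hsubA i).1 hei⟩
          · obtain ⟨i, hi, hei⟩ := Finset.mem_biUnion.mp h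
            exact Finset.mem_biUnion.mpr ⟨i, Finset.mem_union_right _ hi, (hsubA i).2 hei⟩
        · intro e he
          obtain ⟨i, hi, hei⟩ := Finset.mem_biUnion.mp he
          by_cases hii : i = i0
          · rw [hii] at hei
            by_cases hex : e = x
            · refine Finset.mem_union_right _ (Finset.mem_biUnion.mpr ⟨i0, hmemJ, ?_⟩)
              rw [hAy, Function.update_self]
              exact Finset.mem_erase.mpr ⟨fun h => hxy (hex.symm.trans h), hei⟩
            · refine Finset.mem_union_left _ (Finset.mem_biUnion.mpr ⟨i0, hmemI, ?_⟩)
              rw [hAx, Function.update_self]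
              exact Finset.mem_erase.mpr ⟨hex, hei⟩
          · rcases Finset.mem_union.mp hi with h | h
            · refine Finset.mem_union_left _ (Finset.mem_biUnion.mpr ⟨i, h, ?_⟩)
              rw [hAx, Function.update_of_ne hii]; exact hei
            · refine Finset.mem_union_right _ (Finset.mem_biUnion.mpr ⟨i, h, ?_⟩)
              rw [hAy, Function.update_of_ne hii]; exact hei
      have hinter : ((I ∩ J).erase i0).biUnion A ⊆ P ∩ Q := by
        intro e he
        obtain ⟨i, hi, hei⟩ := Finset.mem_biUnion.mp he
        obtain ⟨hii0, hiIJ⟩ := Finset.mem_erase.mp hi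
        refine Finset.mem_inter.mpr ⟨?_, ?_⟩
        · refine Finset.mem_biUnion.mpr ⟨i, (Finset.mem_inter.mp hiIJ).1, ?_⟩
          rw [hAx, Function.update_of_ne hii0]; exact hei
        · refine Finset.mem_biUnion.mpr ⟨i, (Finset.mem_inter.mp hiIJ).2, ?_⟩
          rw [hAy, Function.update_of_ne hii0]; exact hei
      have hsm := cnum_submod P Q
      have hc1 := hcond (I ∪ J) (Finset.union_subset hIs hJs)
      have hc2 := hcond ((I ∩ J).erase i0)
        ((Finset.erase_subset _ _).trans ((Finset.inter_subset_left).trans hIs))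
      have hm1 : cnum (P ∪ Q) = cnum ((I ∪ J).biUnion A) := by rw [hunion]
      have hm2 : cnum (P ∩ Q) ≤ cnum (((I ∩ J).erase i0).biUnion A) :=
        cnum_mono hinter
      have hmemIJ : i0 ∈ I ∩ J := Finset.mem_inter.mpr ⟨hmemI, hmemJ⟩
      have hcarde : ((I ∩ J).erase i0).card = (I ∩ J).card - 1 :=
        Finset.card_erase_of_mem hmemIJ
      have hpos : 1 ≤ (I ∩ J).card := Finset.card_pos.mpr ⟨i0, hmemIJ⟩
      have hcardu := Finset.card_union_add_card_inter I J
      omega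
  
lemma sum_lower (I : Finset ℕ) (hpos : ∀ i ∈ I, 1 ≤ i) (hne : I.Nonempty) :
    I.card.choose 2 + 1 ≤ ∑ i ∈ I, max (i - 1) 1 := by
  classical
  induction I using Finset.strongInduction with
  | _ I ih =>
  have hm := I.max'_mem hne
  set m := I.max' hne with hmdef
  by_cases hI' : I.erase m = ∅
  · have hIm : I = {m} := by
      apply Finset.eq_singleton_iff_unique_mem.mpr
      refine ⟨hm, fun a ha => ?_⟩
      by_contra hne2
      have := Finset.mem_erase.mpr ⟨hne2, ha⟩
      rw [hI'] at this
      simp at this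
    rw [hIm]
    simp
  · have hsub : I.erase m ⊂ I := Finset.erase_ssubset hm
    have hpos' : ∀ i ∈ I.erase m, 1 ≤ i := fun i hi => hpos i (Finset.mem_erase.mp hi).2
    have hne' : (I.erase m).Nonempty := Finset.nonempty_iff_ne_empty.mpr hI'
    have hrec := ih _ hsub hpos' hne'
    have hcarde : (I.erase m).card = I.card - 1 := Finset.card_erase_of_mem hm
    have hr2 : 2 ≤ I.card := by
      have := Finset.card_pos.mpr hne'
      omega
    have hmI : I.card ≤ m := by
      have hsubIcc : I ⊆ Finset.Icc 1 m := by
        intro i hi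
        exact Finset.mem_Icc.mpr ⟨hpos i hi, Finset.le_max' I i hi⟩
      have := Finset.card_le_card hsubIcc
      rwa [Nat.card_Icc, Nat.add_sub_cancel] at this
    have hsumsplit : ∑ i ∈ I.erase m, max (i - 1) 1 + max (m - 1) 1
        = ∑ i ∈ I, max (i - 1) 1 := Finset.sum_erase_add I _ hm
    have hmax : I.card - 1 ≤ max (m - 1) 1 := by
      have : m - 1 ≤ max (m - 1) 1 := le_max_left _ _
      omega
    have hchoose : I.card.choose 2 = (I.card - 1).choose 2 + (I.card - 1) := by
      obtain ⟨r, hr⟩ : ∃ r, I.card = r + 1 := ⟨I.card - 1, by omega⟩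
      rw [hr, Nat.choose_succ_succ, Nat.choose_one_right, Nat.add_sub_cancel, Nat.add_comm]
    rw [hcarde] at hrec
    omega


end CuteProof

open CuteProof

/-- A graph with `n+1` vertices, `1 + C(n,2)` edges and a cute
`n`-edge-colouring (class sizes `1,1,2,…,n-1`) has a heterochromatic spanning tree. -/
theorem stmt1 {V : Type*} [Fintype V] (n : ℕ) (hV : Fintype.card V = n + 1)
    (G : SimpleGraph V) (hE : G.edgeSet.ncard = 1 + n.choose 2)
    (col : Sym2 V → ℕ)
    (hcol : ∀ e ∈ G.edgeSet, col e ∈ Set.Icc 1 n)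
    (g : ℕ → ℕ) (hg : Set.BijOn g (Set.Icc 1 n) (Set.Icc 1 n))
    (hcute : ∀ i ∈ Set.Icc 1 n,
      ({e ∈ G.edgeSet | col e = g i} : Set (Sym2 V)).ncard = max (i - 1) 1) :
    ∃ T : SimpleGraph V, T ≤ G ∧ T.IsTree ∧ Set.InjOn col T.edgeSet := by
  classical
  have hnV : Nonempty V := Fintype.card_pos_iff.mp (by omega)
  -- the colour classes as finsets
  set A : ℕ → Finset (Sym2 V) :=
    fun i => (Set.toFinite ({e ∈ G.edgeSet | col e = g i} : Set (Sym2 V))).toFinset with hA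
  have hmemA : ∀ i e, e ∈ A i ↔ e ∈ G.edgeSet ∧ col e = g i := by
    intro i e
    rw [hA, Set.Finite.mem_toFinset]
    exact Iff.rfl
  have hAcard : ∀ i ∈ Finset.Icc 1 n, (A i).card = max (i - 1) 1 := by
    intro i hi
    rw [hA, ← Set.ncard_eq_toFinset_card _ _]
    exact hcute i (by rw [← Finset.coe_Icc]; exact hi)
  have hAdisj : ∀ i ∈ Finset.Icc 1 n, ∀ j ∈ Finset.Icc 1 n, i ≠ j →
      Disjoint (A i) (A j) := by
    intro i hi j hj hij
    rw [Finset.disjoint_left]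
    intro e hei hej
    rw [hmemA] at hei hej
    apply hij
    apply hg.injOn
    · rw [← Finset.coe_Icc]; exact hi
    · rw [← Finset.coe_Icc]; exact hj
    · rw [← hei.2, ← hej.2]
  -- the rank condition
  have hcond : ∀ I ⊆ Finset.Icc 1 n, cnum (I.biUnion A) + I.card ≤ Fintype.card V := by
    intro I hIs
    rcases I.eq_empty_or_nonempty with rfl | hne
    · rw [Finset.biUnion_empty, Finset.card_empty, cnum_empty]
      omega
    · by_contra hcon
      push_neg at hcon
      set B := I.biUnion A with hB
      have hBcard : B.card = ∑ i ∈ I, (A i).card :=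
        Finset.card_biUnion (fun i hi j hj hij =>
          hAdisj i (hIs hi) j (hIs hj) hij)
      have hsum : I.card.choose 2 + 1 ≤ ∑ i ∈ I, (A i).card := by
        have h1 : ∑ i ∈ I, (A i).card = ∑ i ∈ I, max (i - 1) 1 :=
          Finset.sum_congr rfl (fun i hi => hAcard i (hIs hi))
        rw [h1]
        exact sum_lower I (fun i hi => (Finset.mem_Icc.mp (hIs hi)).1) hne
      have hnd : ∀ e ∈ B, ¬ e.IsDiag := by
        intro e he
        obtain ⟨i, _, hei⟩ := Finset.mem_biUnion.mp he
        exact G.not_isDiag_of_mem_edgeSet ((hmemA i e).mp hei).1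
      have hbound := cnum_card_bound B hnd
      have harg : Fintype.card V + 1 - cnum B ≤ I.card := by omega
      have hmono := Nat.choose_le_choose 2 harg
      omega
  -- apply the Rado-type theorem
  obtain ⟨t, hmem, hinj, hbnd⟩ := rado (∑ i ∈ Finset.Icc 1 n, (A i).card) A
    (Finset.Icc 1 n) le_rfl hcond
  set X := (Finset.Icc 1 n).image t with hX
  have hscard : (Finset.Icc 1 n).card = n := by rw [Nat.card_Icc]; omega
  have hXcard : X.card = n := by
    rw [hX, Finset.card_image_of_injOn hinj, hscard]
  have hXsub : (↑X : Set (Sym2 V)) ⊆ G.edgeSet := by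
    intro e he
    rw [hX] at he
    obtain ⟨i, hi, rfl⟩ := Finset.mem_image.mp he
    exact ((hmemA i _).mp (hmem i hi)).1
  set H := fromEdgeSet (↑X : Set (Sym2 V)) with hH
  have hcfin : Finite H.ConnectedComponent := by
    unfold SimpleGraph.ConnectedComponent; infer_instance
  have hcnum1 : cnum X = 1 := by
    have hup : cnum X + n ≤ n + 1 := by
      have h0 := hbnd
      rw [hscard, hV] at h0
      exact h0
    have hlow : 1 ≤ cnum X := by
      have : Nonempty H.ConnectedComponent :=
        ⟨H.connectedComponentMk (Classical.arbitrary V)⟩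
      exact Nat.one_le_iff_ne_zero.mpr (Nat.card_ne_zero.mpr ⟨this, hcfin⟩)
    omega
  have hconn : H.Connected := by
    constructor
    intro a b
    have hsub : Subsingleton H.ConnectedComponent :=
      (Nat.card_eq_one_iff_unique.mp hcnum1).1
    exact SimpleGraph.ConnectedComponent.eq.mp
      (Subsingleton.elim (H.connectedComponentMk a) (H.connectedComponentMk b))
  have hacyc : H.IsAcyclic := by
    intro v c hc
    cases c with
    | nil => exact hc.ne_nil rfl
    | @cons _ b _ hadj p =>
      have he : s(v, b) ∈ X := by
        have := ((fromEdgeSet_adj _).mp hadj).1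
        exact_mod_cast this
      have hnotin : s(v, b) ∉ p.edges := by
        have hnd := hc.edges_nodup
        rw [Walk.edges_cons] at hnd
        exact (List.nodup_cons.mp hnd).1
      have hreach : (H.deleteEdges {s(v, b)}).Reachable b v :=
        ⟨p.toDeleteEdge _ hnotin⟩
      have hle : H.deleteEdges {s(v, b)} ≤ fromEdgeSet (↑(X.erase s(v, b)) : Set (Sym2 V)) := by
        intro a b' hab
        rw [deleteEdges_adj] at hab
        rw [hH, fromEdgeSet_adj] at hab
        rw [fromEdgeSet_adj]
        refine ⟨?_, hab.1.2⟩
        rw [Finset.coe_erase]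
        exact Set.mem_diff_of_mem hab.1.1 (by simpa using hab.2)
      have hreach' : (fromEdgeSet (↑(X.erase s(v, b)) : Set (Sym2 V))).Reachable v b :=
        (hreach.mono hle).symm
      have heq : cnum X = cnum (X.erase s(v, b)) := by
        conv_lhs => rw [← Finset.insert_erase he]
        exact cnum_insert_reach hadj.ne hreach'
      have h4 := card_add_cnum (X.erase s(v, b))
      have h5 : (X.erase s(v, b)).card = X.card - 1 := Finset.card_erase_of_mem he
      have h6 : 1 ≤ X.card := Finset.card_pos.mpr ⟨_, he⟩
      rw [hXcard] at h5 h6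
      rw [← heq, hcnum1] at h4
      rw [hV] at h4
      omega
  refine ⟨H, ?_, ⟨hconn, hacyc⟩, ?_⟩
  · calc H ≤ fromEdgeSet G.edgeSet := fromEdgeSet_mono hXsub
      _ = G := fromEdgeSet_edgeSet G
  · have hedge : H.edgeSet = (↑X : Set (Sym2 V)) := by
      rw [hH, edgeSet_fromEdgeSet]
      ext e
      simp only [Set.mem_diff, Set.mem_setOf_eq, Finset.mem_coe, and_iff_left_iff_imp]
      intro he
      exact G.not_isDiag_of_mem_edgeSet (hXsub he)
    rw [hedge]
    intro e1 h1 e2 h2 hcoleq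
    obtain ⟨i, hi, rfl⟩ := Finset.mem_image.mp (by exact_mod_cast h1)
    obtain ⟨j, hj, rfl⟩ := Finset.mem_image.mp (by exact_mod_cast h2)
    have hgi : col (t i) = g i := ((hmemA i _).mp (hmem i hi)).2
    have hgj : col (t j) = g j := ((hmemA j _).mp (hmem j hj)).2
    have hij : i = j := by
      apply hg.injOn
      · rw [← Finset.coe_Icc]; exact hi
      · rw [← Finset.coe_Icc]; exact hj
      · rw [← hgi, ← hgj]; exact hcoleq
    rw [hij]
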